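/- Let m, n be positive integers with n ≤ m and suppose n is odd. Then for the dilation factor d=2, the polynomial P_{m,n}(y) = Σ_{j=0}^{n-1} C(m-1+j, j) y^j satisfies P_{m,n}(y) > 0 for all real y. -/

import Mathlib

open Finset

private lemma nat_step (m j : ℕ) (hm : 0 < m) :
    (j + 1) * (m - 1 + (j + 1)).choose (j + 1) = (m + j) * ((m - 1 + j).choose j) := by
  have h2 : m - 1 + (j + 1) = (m - 1 + j) + 1 := by omega
  have h3 : (m - 1 + j) + 1 = m + j := by omega
  rw [h2, Nat.mul_comm, ← Nat.add_one_mul_choose_eq, h3]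

private lemma key_id (m n : ℕ) (hm : 0 < m) (y : ℝ) :
    (m : ℝ) * (∑ j ∈ range n, ((m - 1 + j).choose j : ℝ) * y ^ j)
      - (1 - y) * (∑ j ∈ range n, ((m - 1 + j).choose j : ℝ) * ((j : ℝ) * y ^ (j - 1)))
    = (n : ℝ) * ((m - 1 + n).choose n : ℝ) * y ^ (n - 1) := by
  have hterm : ∀ j : ℕ,
      (m : ℝ) * (((m - 1 + j).choose j : ℝ) * y ^ j)
        - (1 - y) * (((m - 1 + j).choose j : ℝ) * ((j : ℝ) * y ^ (j - 1)))
      = ((j + 1 : ℕ) : ℝ) * ((m - 1 + (j + 1)).choose (j + 1) : ℝ) * y ^ ((j + 1) - 1)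
        - (j : ℝ) * ((m - 1 + j).choose j : ℝ) * y ^ (j - 1) := by
    intro j
    cases j with
    | zero =>
      have h1 : m - 1 + 1 = m := by omega
      simp [h1]
    | succ k =>
      have h' := congrArg (fun x : ℕ => (x : ℝ)) (nat_step m (k + 1) hm)
      push_cast at h'
      have e1 : ((k + 1) + 1) - 1 = k + 1 := rfl
      have e2 : (k + 1) - 1 = k := rfl
      rw [e1, e2]
      have e3 : y ^ (k + 1) = y ^ k * y := pow_succ y k
      rw [e3]
      push_cast
      rw [show m - 1 + (k + 1 + 1) = m - 1 + k + 1 + 1 from by omega,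
        show m - 1 + (k + 1) = m - 1 + k + 1 from by omega] at h' ⊢
      linear_combination (-(y ^ k * y)) * h'
  calc (m : ℝ) * (∑ j ∈ range n, ((m - 1 + j).choose j : ℝ) * y ^ j)
      - (1 - y) * (∑ j ∈ range n, ((m - 1 + j).choose j : ℝ) * ((j : ℝ) * y ^ (j - 1)))
      = ∑ j ∈ range n,
          (((j + 1 : ℕ) : ℝ) * ((m - 1 + (j + 1)).choose (j + 1) : ℝ) * y ^ ((j + 1) - 1)
            - (j : ℝ) * ((m - 1 + j).choose j : ℝ) * y ^ (j - 1)) := by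
        rw [Finset.mul_sum, Finset.mul_sum, ← Finset.sum_sub_distrib]
        exact Finset.sum_congr rfl fun j _ => hterm j
    _ = (n : ℝ) * ((m - 1 + n).choose n : ℝ) * y ^ (n - 1) := by
        rw [Finset.sum_range_sub (fun j => (j : ℝ) * ((m - 1 + j).choose j : ℝ) * y ^ (j - 1)) n]
        push_cast
        ring

/-- For d=2, n odd with 1 ≤ n ≤ m, P_{m,n}(y) = Σ_{j<n} C(m-1+j,j) y^j is
strictly positive on all of ℝ. -/
theorem stmt4 (m n : ℕ) (hm : 0 < m) (hn : 0 < n) (hnm : n ≤ m) (hodd : Odd n) :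
    ∀ y : ℝ, 0 < ∑ j ∈ Finset.range n, ((m - 1 + j).choose j : ℝ) * y ^ j := by
  intro y
  rcases le_or_gt 0 y with hy | hy
  · apply Finset.sum_pos'
    · intro i _
      positivity
    · exact ⟨0, Finset.mem_range.mpr hn, by simp⟩
  · -- y < 0 : calculus argument
    set g : ℝ → ℝ := fun t => (1 - t) ^ m * ∑ j ∈ range n, ((m - 1 + j).choose j : ℝ) * t ^ j
      with hg
    have hd : ∀ t : ℝ, HasDerivAt g
        (-(((n : ℝ) * ((m - 1 + n).choose n : ℝ)) * ((1 - t) ^ (m - 1) * t ^ (n - 1)))) t := by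
      intro t
      have h1 : HasDerivAt (fun t : ℝ => (1 - t) ^ m)
          ((m : ℝ) * (1 - t) ^ (m - 1) * (-1)) t :=
        ((hasDerivAt_id t).const_sub 1).pow m
      have h2 : HasDerivAt (fun t : ℝ => ∑ j ∈ range n, ((m - 1 + j).choose j : ℝ) * t ^ j)
          (∑ j ∈ range n, ((m - 1 + j).choose j : ℝ) * ((j : ℝ) * t ^ (j - 1))) t := by
        apply HasDerivAt.fun_sum
        intro j _
        exact (hasDerivAt_pow j t).const_mul _
      have hmul := h1.fun_mul h2
      refine hmul.congr_deriv (Eq.symm ?_)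
      have hkey := key_id m n hm t
      have hpow : (1 - t) ^ m = (1 - t) ^ (m - 1) * (1 - t) := by
        rw [← pow_succ]
        congr 1
        omega
      rw [hpow]
      linear_combination ((1 - t) ^ (m - 1)) * hkey
    have hdiff : Differentiable ℝ g := fun t => (hd t).differentiableAt
    have hanti : AntitoneOn g (Set.Iic (0 : ℝ)) := by
      apply antitoneOn_of_deriv_nonpos (convex_Iic 0) hdiff.continuous.continuousOn
        (fun x _ => (hdiff x).differentiableWithinAt)
      intro x hx
      rw [(hd x).deriv]
      have hxlt : x < 0 := by
        simpa using hx
      have h1 : (0 : ℝ) ≤ (1 - x) ^ (m - 1) := (pow_pos (by linarith) _).le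
      have heven : Even (n - 1) := Nat.Odd.sub_odd hodd odd_one
      have h2 : (0 : ℝ) ≤ x ^ (n - 1) := heven.pow_nonneg x
      have hK : (0 : ℝ) ≤ (n : ℝ) * ((m - 1 + n).choose n : ℝ) := by positivity
      exact neg_nonpos.mpr (mul_nonneg hK (mul_nonneg h1 h2))
    have hg0 : g 0 = 1 := by
      have hsum : ∑ j ∈ range n, ((m - 1 + j).choose j : ℝ) * (0 : ℝ) ^ j = 1 := by
        rw [Finset.sum_eq_single_of_mem 0 (Finset.mem_range.mpr hn)]
        · simp
        · intro b _ hb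
          simp [zero_pow hb]
      simp [hg, hsum]
    have hge : 1 ≤ g y := by
      have := hanti (Set.mem_Iic.mpr hy.le) (Set.mem_Iic.mpr le_rfl) hy.le
      rwa [hg0] at this
    have hpow : (0 : ℝ) < (1 - y) ^ m := pow_pos (by linarith) m
    by_contra h
    push_neg at h
    have : g y ≤ 0 := mul_nonpos_of_nonneg_of_nonpos hpow.le h
    linarith
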